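/- Four points ⟨a,b,c,d⟩ in this order on a line have their cross ratio preserved by central projection: if two lines ℓ₁, ℓ₂ in the plane are given, v is a point not on either line, and a_i, b_i, c_i, d_i are the intersections of four concurrent lines through v with ℓ_i (i = 1,2), then (‖c₁−a₁‖/‖b₁−a₁‖)·(‖b₁−d₁‖/‖c₁−d₁‖) = (‖c₂−a₂‖/‖b₂−a₂‖)·(‖b₂−d₂‖/‖c₂−d₂‖). -/

import Mathlib

set_option maxHeartbeats 2000000

section Helpers

variable {E : Type*} [NormedAddCommGroup E] [NormedSpace ℝ E]

lemma aux_collinear_param {v a b : E} (h : Collinear ℝ ({v, a, b} : Set E)) (ha : a ≠ v) :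
    ∃ c : ℝ, b - v = c • (a - v) := by
  rw [collinear_iff_of_mem (Set.mem_insert v _)] at h
  obtain ⟨w, hw⟩ := h
  obtain ⟨r₁, h₁⟩ := hw a (by simp)
  obtain ⟨r₂, h₂⟩ := hw b (by simp)
  have ha' : a - v = r₁ • w := by rw [h₁]; simp [vadd_eq_add]
  have hb' : b - v = r₂ • w := by rw [h₂]; simp [vadd_eq_add]
  have hr₁ : r₁ ≠ 0 := by
    rintro rfl
    apply ha
    have : a - v = 0 := by simp [ha']
    exact sub_eq_zero.mp this
  exact ⟨r₂ / r₁, by rw [ha', hb', smul_smul, div_mul_cancel₀ _ hr₁]⟩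

lemma aux_collinear_param4 {a b c d : E} (h : Collinear ℝ ({a, b, c, d} : Set E)) (hba : b ≠ a) :
    ∃ t r : ℝ, c - a = t • (b - a) ∧ d - a = r • (b - a) := by
  rw [collinear_iff_of_mem (Set.mem_insert a _)] at h
  obtain ⟨w, hw⟩ := h
  obtain ⟨rb, hb'⟩ := hw b (by simp)
  obtain ⟨rc, hc'⟩ := hw c (by simp)
  obtain ⟨rd, hd'⟩ := hw d (by simp)
  have hb2 : b - a = rb • w := by rw [hb']; simp [vadd_eq_add]
  have hc2 : c - a = rc • w := by rw [hc']; simp [vadd_eq_add]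
  have hd2 : d - a = rd • w := by rw [hd']; simp [vadd_eq_add]
  have hrb : rb ≠ 0 := by
    rintro rfl
    exact hba (sub_eq_zero.mp (by simp [hb2]))
  exact ⟨rc / rb, rd / rb,
    by rw [hc2, hb2, smul_smul, div_mul_cancel₀ _ hrb],
    by rw [hd2, hb2, smul_smul, div_mul_cancel₀ _ hrb]⟩

lemma aux_not_collinear {v a b : E} (h : ¬ Collinear ℝ ({v, a, b} : Set E))
    {s t : ℝ} (hst : s • (a - v) + t • (b - v) = 0) : s = 0 ∧ t = 0 := by
  by_contra hcon
  apply h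
  by_cases ht : t = 0
  · have hs : s ≠ 0 := by tauto
    subst ht
    have hav : a - v = 0 := by
      have := hst
      rw [zero_smul, add_zero] at this
      exact (smul_eq_zero.mp this).resolve_left hs
    have hav' : a = v := sub_eq_zero.mp hav
    subst hav'
    simp only [Set.insert_idem]
    exact collinear_pair ℝ _ _
  · have hbv : b - v = (-s / t) • (a - v) := by
      have h1 : t • (b - v) = (-s) • (a - v) := by
        rw [neg_smul]; linear_combination (norm := module) hst
      rw [div_eq_mul_inv, mul_comm, mul_smul, ← h1, smul_smul, inv_mul_cancel₀ ht, one_smul]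
    rw [collinear_iff_of_mem (Set.mem_insert v _)]
    refine ⟨a - v, fun p hp => ?_⟩
    simp only [Set.mem_insert_iff, Set.mem_singleton_iff] at hp
    rcases hp with rfl | rfl | rfl
    · exact ⟨0, by simp⟩
    · exact ⟨1, by simp⟩
    · exact ⟨-s / t, by rw [← hbv]; simp⟩

lemma aux_sbtw {x u : E} (hu : u ≠ 0) {p q s : ℝ}
    (h : Sbtw ℝ (x + p • u) (x + q • u) (x + s • u)) : 0 < (s - q) * (q - p) := by
  have hw := h.wbtw
  rw [wbtw_iff_sameRay_vsub] at hw
  have e1 : (x + q • u) -ᵥ (x + p • u) = (q - p) • u := by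
    rw [vsub_eq_sub, sub_smul]; abel
  have e2 : (x + s • u) -ᵥ (x + q • u) = (s - q) • u := by
    rw [vsub_eq_sub, sub_smul]; abel
  rw [e1, e2] at hw
  have hqp : q - p ≠ 0 := by
    intro h0
    apply h.ne_left
    have : q = p := by linarith [sub_eq_zero.mp h0]
    rw [this]
  have hsq : s - q ≠ 0 := by
    intro h0
    apply h.ne_right
    have : s = q := by linarith [sub_eq_zero.mp h0]
    rw [this]
  have hre : (s - q) • u = ((s - q) / (q - p)) • ((q - p) • u) := by
    rw [smul_smul, div_mul_cancel₀ _ hqp]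
  rw [hre] at hw
  have hne : (q - p) • u ≠ 0 := smul_ne_zero hqp hu
  have hpos : 0 ≤ (s - q) / (q - p) := (sameRay_smul_right_iff.mp hw).resolve_right hne
  have hne2 : (s - q) / (q - p) ≠ 0 := div_ne_zero hsq hqp
  have hlt : 0 < (s - q) / (q - p) := lt_of_le_of_ne hpos (Ne.symm hne2)
  have hsign : 0 < ((s - q) / (q - p)) * ((q - p) * (q - p)) :=
    mul_pos hlt (mul_self_pos.mpr hqp)
  calc 0 < ((s - q) / (q - p)) * ((q - p) * (q - p)) := hsign
    _ = (s - q) * (q - p) := by field_simp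

/-- Extract ordered parameters for 4 points on a line:
    `b = a + u`, `c = a + t•u`, `d = a + r•u` with `1 < t < r`. -/
lemma aux_line_params {a b c d : E} (h : Collinear ℝ ({a, b, c, d} : Set E))
    (h1 : Sbtw ℝ a b c) (h2 : Sbtw ℝ b c d) :
    ∃ t r : ℝ, c - a = t • (b - a) ∧ d - a = r • (b - a) ∧ 1 < t ∧ t < r := by
  have hba : b ≠ a := h1.ne_left
  have hu : b - a ≠ 0 := sub_ne_zero.mpr hba
  obtain ⟨t, r, hc, hd⟩ := aux_collinear_param4 h hba
  have ea : a = a + (0 : ℝ) • (b - a) := by simp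
  have eb : b = a + (1 : ℝ) • (b - a) := by rw [one_smul]; abel
  have ec : c = a + t • (b - a) := by rw [← hc]; abel
  have ed : d = a + r • (b - a) := by rw [← hd]; abel
  have o1 : 0 < (t - 1) * (1 - 0) := by
    apply aux_sbtw hu
    rw [← ea, ← eb, ← ec]; exact h1
  have o2 : 0 < (r - t) * (t - 1) := by
    apply aux_sbtw hu
    rw [← eb, ← ec, ← ed]; exact h2
  have ht1 : 1 < t := by nlinarith
  have htr : t < r := by nlinarith
  exact ⟨t, r, hc, hd, ht1, htr⟩

end Helpers

/-- The cross ratio of four points in order on a line is preserved by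
central projection from a point `v` onto another line. -/
theorem crossRatio_central_projection
    (v a₁ b₁ c₁ d₁ a₂ b₂ c₂ d₂ : EuclideanSpace ℝ (Fin 2))
    (hline₁ : Collinear ℝ ({a₁, b₁, c₁, d₁} : Set (EuclideanSpace ℝ (Fin 2))))
    (hline₂ : Collinear ℝ ({a₂, b₂, c₂, d₂} : Set (EuclideanSpace ℝ (Fin 2))))
    (hord₁ : Sbtw ℝ a₁ b₁ c₁ ∧ Sbtw ℝ b₁ c₁ d₁)
    (hord₂ : Sbtw ℝ a₂ b₂ c₂ ∧ Sbtw ℝ b₂ c₂ d₂)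
    (hva : Collinear ℝ ({v, a₁, a₂} : Set (EuclideanSpace ℝ (Fin 2))))
    (hvb : Collinear ℝ ({v, b₁, b₂} : Set (EuclideanSpace ℝ (Fin 2))))
    (hvc : Collinear ℝ ({v, c₁, c₂} : Set (EuclideanSpace ℝ (Fin 2))))
    (hvd : Collinear ℝ ({v, d₁, d₂} : Set (EuclideanSpace ℝ (Fin 2))))
    (hv₁ : ¬ Collinear ℝ ({v, a₁, b₁} : Set (EuclideanSpace ℝ (Fin 2))))
    (hv₂ : ¬ Collinear ℝ ({v, a₂, b₂} : Set (EuclideanSpace ℝ (Fin 2)))) :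
    (‖c₁ - a₁‖ / ‖b₁ - a₁‖) * (‖b₁ - d₁‖ / ‖c₁ - d₁‖) =
      (‖c₂ - a₂‖ / ‖b₂ - a₂‖) * (‖b₂ - d₂‖ / ‖c₂ - d₂‖) := by
  obtain ⟨h1, h2⟩ := hord₁
  obtain ⟨h1', h2'⟩ := hord₂
  obtain ⟨t, r, hc1, hd1, ht1, htr⟩ := aux_line_params hline₁ h1 h2
  obtain ⟨t', r', hc2, hd2, ht1', htr'⟩ := aux_line_params hline₂ h1' h2'
  -- points distinct from v
  have hsub₁ : ∀ p, p ∈ ({a₁, b₁, c₁, d₁} : Set (EuclideanSpace ℝ (Fin 2))) → p ≠ v := by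
    intro p hp hpv
    apply hv₁
    apply hline₁.subset
    rw [← hpv]
    intro x hx
    simp only [Set.mem_insert_iff, Set.mem_singleton_iff] at hx hp ⊢
    rcases hx with rfl | rfl | rfl
    · tauto
    · tauto
    · tauto
  have hsub₂ : ∀ p, p ∈ ({a₂, b₂, c₂, d₂} : Set (EuclideanSpace ℝ (Fin 2))) → p ≠ v := by
    intro p hp hpv
    apply hv₂
    apply hline₂.subset
    rw [← hpv]
    intro x hx
    simp only [Set.mem_insert_iff, Set.mem_singleton_iff] at hx hp ⊢
    rcases hx with rfl | rfl | rfl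
    · tauto
    · tauto
    · tauto
  -- nonzero base points
  have ha1v : a₁ ≠ v := hsub₁ a₁ (by simp)
  have hb1v : b₁ ≠ v := hsub₁ b₁ (by simp)
  have hc1v : c₁ ≠ v := hsub₁ c₁ (by simp)
  have hd1v : d₁ ≠ v := hsub₁ d₁ (by simp)
  -- projection scalars
  obtain ⟨α, hα⟩ := aux_collinear_param hva ha1v
  obtain ⟨β, hβ⟩ := aux_collinear_param hvb hb1v
  obtain ⟨γ, hγ⟩ := aux_collinear_param hvc hc1v
  obtain ⟨δ, hδ⟩ := aux_collinear_param hvd hd1v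
  have hα0 : α ≠ 0 := by
    rintro rfl
    exact hsub₂ a₂ (by simp) (sub_eq_zero.mp (by simp [hα]))
  have hβ0 : β ≠ 0 := by
    rintro rfl
    exact hsub₂ b₂ (by simp) (sub_eq_zero.mp (by simp [hβ]))
  have hγ0 : γ ≠ 0 := by
    rintro rfl
    exact hsub₂ c₂ (by simp) (sub_eq_zero.mp (by simp [hγ]))
  have hδ0 : δ ≠ 0 := by
    rintro rfl
    exact hsub₂ d₂ (by simp) (sub_eq_zero.mp (by simp [hδ]))
  -- vector identities
  have hu2 : b₂ - a₂ = (β - α) • (a₁ - v) + β • (b₁ - a₁) := by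
    have h0 : b₂ - a₂ = (b₂ - v) - (a₂ - v) := by abel
    rw [h0, hβ, hα]; module
  -- relation for c
  have hW1c : c₂ - v = γ • (a₁ - v) + (γ * t) • (b₁ - a₁) := by
    have h0 : c₁ - v = (a₁ - v) + t • (b₁ - a₁) := by rw [← hc1]; abel
    rw [hγ, h0]; module
  have hW2c : c₂ - v = (α + t' * (β - α)) • (a₁ - v) + (t' * β) • (b₁ - a₁) := by
    have h0 : c₂ - v = (a₂ - v) + (c₂ - a₂) := by abel
    rw [h0, hα, hc2, hu2]; module
  have hzc : ((γ - (α + t' * (β - α))) - (γ * t - t' * β)) • (a₁ - v)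
      + (γ * t - t' * β) • (b₁ - v) = 0 := by
    have h3 := hW1c.symm.trans hW2c
    linear_combination (norm := module) h3
  obtain ⟨hSTc, hTc⟩ := aux_not_collinear hv₁ hzc
  have hA : γ = α + t' * (β - α) := by linarith
  have hB : γ * t = t' * β := by linarith
  -- relation for d
  have hW1d : d₂ - v = δ • (a₁ - v) + (δ * r) • (b₁ - a₁) := by
    have h0 : d₁ - v = (a₁ - v) + r • (b₁ - a₁) := by rw [← hd1]; abel
    rw [hδ, h0]; module
  have hW2d : d₂ - v = (α + r' * (β - α)) • (a₁ - v) + (r' * β) • (b₁ - a₁) := by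
    have h0 : d₂ - v = (a₂ - v) + (d₂ - a₂) := by abel
    rw [h0, hα, hd2, hu2]; module
  have hzd : ((δ - (α + r' * (β - α))) - (δ * r - r' * β)) • (a₁ - v)
      + (δ * r - r' * β) • (b₁ - v) = 0 := by
    have h3 := hW1d.symm.trans hW2d
    linear_combination (norm := module) h3
  obtain ⟨hSTd, hTd⟩ := aux_not_collinear hv₁ hzd
  have hC : δ = α + r' * (β - α) := by linarith
  have hD : δ * r = r' * β := by linarith
  -- key scalar relations
  have key_t : α * t = t' * (β * (1 - t) + α * t) := by linear_combination hB - t * hA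
  have key_r : α * r = r' * (β * (1 - r) + α * r) := by linear_combination hD - r * hC
  have ht0 : t ≠ 0 := by intro h0; rw [h0] at ht1; linarith
  have hr0 : r ≠ 0 := by intro h0; rw [h0] at htr; linarith
  have hDt : β * (1 - t) + α * t ≠ 0 := by
    intro h0
    rw [h0, mul_zero] at key_t
    exact mul_ne_zero hα0 ht0 key_t
  have hDr : β * (1 - r) + α * r ≠ 0 := by
    intro h0
    rw [h0, mul_zero] at key_r
    exact mul_ne_zero hα0 hr0 key_r
  have ht'eq : t' = α * t / (β * (1 - t) + α * t) := by
    field_simp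
    linear_combination -key_t
  have hr'eq : r' = α * r / (β * (1 - r) + α * r) := by
    field_simp
    linear_combination -key_r
  -- the cross-ratio identity in parameters
  have keyP : t * (r - 1) * (r' - t') = t' * (r' - 1) * (r - t) := by
    apply mul_left_cancel₀ (mul_ne_zero hDt hDr)
    linear_combination (t * (r - 1) * (β * (1 - r) + α * r) + (r' * (β * (1 - r) + α * r) - (β * (1 - r) + α * r)) * (r - t)) * key_t + (α * t * (r - t) - t * (r - 1) * (β * (1 - t) + α * t)) * key_r
  have hrt : (0:ℝ) < r - t := by linarith
  have hrt' : (0:ℝ) < r' - t' := by linarith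
  have main : t * (r - 1) / (r - t) = t' * (r' - 1) / (r' - t') := by
    rw [div_eq_div_iff hrt.ne' hrt'.ne']
    linear_combination keyP
  -- rewrite norms
  have hn1 : ‖c₁ - a₁‖ = t * ‖b₁ - a₁‖ := by
    rw [hc1, norm_smul, Real.norm_eq_abs, abs_of_pos (by linarith)]
  have hbd1 : b₁ - d₁ = (1 - r) • (b₁ - a₁) := by rw [sub_smul, one_smul, ← hd1]; abel
  have hn2 : ‖b₁ - d₁‖ = (r - 1) * ‖b₁ - a₁‖ := by
    rw [hbd1, norm_smul, Real.norm_eq_abs, abs_of_neg (by linarith)]; ring_nf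
  have hcd1 : c₁ - d₁ = (t - r) • (b₁ - a₁) := by rw [sub_smul, ← hc1, ← hd1]; abel
  have hn3 : ‖c₁ - d₁‖ = (r - t) * ‖b₁ - a₁‖ := by
    rw [hcd1, norm_smul, Real.norm_eq_abs, abs_of_neg (by linarith)]; ring_nf
  have hn1' : ‖c₂ - a₂‖ = t' * ‖b₂ - a₂‖ := by
    rw [hc2, norm_smul, Real.norm_eq_abs, abs_of_pos (by linarith)]
  have hbd2 : b₂ - d₂ = (1 - r') • (b₂ - a₂) := by rw [sub_smul, one_smul, ← hd2]; abel
  have hn2' : ‖b₂ - d₂‖ = (r' - 1) * ‖b₂ - a₂‖ := by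
    rw [hbd2, norm_smul, Real.norm_eq_abs, abs_of_neg (by linarith)]; ring_nf
  have hcd2 : c₂ - d₂ = (t' - r') • (b₂ - a₂) := by rw [sub_smul, ← hc2, ← hd2]; abel
  have hn3' : ‖c₂ - d₂‖ = (r' - t') * ‖b₂ - a₂‖ := by
    rw [hcd2, norm_smul, Real.norm_eq_abs, abs_of_neg (by linarith)]; ring_nf
  have hN1 : ‖b₁ - a₁‖ ≠ 0 := norm_ne_zero_iff.mpr (sub_ne_zero.mpr h1.ne_left)
  have hN2 : ‖b₂ - a₂‖ ≠ 0 := norm_ne_zero_iff.mpr (sub_ne_zero.mpr h1'.ne_left)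
  have red : ∀ (N tt rr : ℝ), N ≠ 0 → rr - tt ≠ 0 →
      tt * N / N * ((rr - 1) * N / ((rr - tt) * N)) = tt * (rr - 1) / (rr - tt) := by
    intro N tt rr hN hrr
    field_simp
  rw [hn1, hn2, hn3, hn1', hn2', hn3', red _ t r hN1 hrt.ne', red _ t' r' hN2 hrt'.ne']
  exact main
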